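/- Any ortholattice in which the 3-Go equation holds for all elements is orthomodular: if for all a, b, c one has (a→b) ⊓ (b→c) ⊓ (c→a) = (c→b) ⊓ (b→a) ⊓ (a→c), then for all a, b, a ≤ b implies a ⊔ (a' ⊓ b) = b. -/

import Mathlib

/-- An ortholattice: a bounded lattice with an orthocomplementation. -/
class Ortholattice (α : Type*) extends Lattice α, BoundedOrder α, Compl α where
  compl_compl : ∀ a : α, aᶜᶜ = a
  compl_le_compl : ∀ a b : α, a ≤ b → bᶜ ≤ aᶜ
  inf_compl_self : ∀ a : α, a ⊓ aᶜ = ⊥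
  sup_compl_self : ∀ a : α, a ⊔ aᶜ = ⊤

/-- The Sasaki hook `a → b := a' ⊔ (a ⊓ b)`. -/
def sasaki {α : Type*} [Ortholattice α] (a b : α) : α := aᶜ ⊔ (a ⊓ b)

section Aux
variable {α : Type*} [Ortholattice α]

private lemma ol_compl_bot : (⊥ : α)ᶜ = ⊤ := by
  have h := Ortholattice.sup_compl_self (⊥ : α)
  simpa using h

private lemma ol_dm_sup (x y : α) : (x ⊔ y)ᶜ = xᶜ ⊓ yᶜ := by
  apply le_antisymm
  · exact le_inf (Ortholattice.compl_le_compl _ _ le_sup_left)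
      (Ortholattice.compl_le_compl _ _ le_sup_right)
  · have hx : x ≤ (xᶜ ⊓ yᶜ)ᶜ := by
      have := Ortholattice.compl_le_compl _ _ (inf_le_left : xᶜ ⊓ yᶜ ≤ xᶜ)
      simpa [Ortholattice.compl_compl] using this
    have hy : y ≤ (xᶜ ⊓ yᶜ)ᶜ := by
      have := Ortholattice.compl_le_compl _ _ (inf_le_right : xᶜ ⊓ yᶜ ≤ yᶜ)
      simpa [Ortholattice.compl_compl] using this
    have := Ortholattice.compl_le_compl _ _ (sup_le hx hy)
    simpa [Ortholattice.compl_compl] using this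

private lemma ol_dm_inf (x y : α) : (x ⊓ y)ᶜ = xᶜ ⊔ yᶜ := by
  have h := ol_dm_sup (xᶜ) (yᶜ)
  rw [Ortholattice.compl_compl, Ortholattice.compl_compl] at h
  rw [← h, Ortholattice.compl_compl]

end Aux

/-- Any ortholattice in which the 3-Go equation holds is orthomodular. -/
theorem stmt_9 {α : Type*} [Ortholattice α]
    (h3Go : ∀ a b c : α,
      sasaki a b ⊓ sasaki b c ⊓ sasaki c a = sasaki c b ⊓ sasaki b a ⊓ sasaki a c) :
    ∀ a b : α, a ≤ b → a ⊔ (aᶜ ⊓ b) = b := by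
  intro a b hab
  have key := h3Go ⊥ a b
  have hab' : a ⊓ b = a := inf_eq_left.2 hab
  have hba : b ⊓ a = a := inf_eq_right.2 hab
  have hsa : aᶜ ⊔ a = ⊤ := by rw [sup_comm]; exact Ortholattice.sup_compl_self a
  simp only [sasaki, ol_compl_bot, bot_inf_eq, inf_bot_eq, sup_bot_eq, top_sup_eq,
    hab', hba, hsa, top_inf_eq, inf_top_eq] at key
  -- key : bᶜ = (bᶜ ⊔ a) ⊓ aᶜ
  have hb : b = ((bᶜ ⊔ a) ⊓ aᶜ)ᶜ := by
    rw [← key, Ortholattice.compl_compl]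
  rw [ol_dm_inf, ol_dm_sup, Ortholattice.compl_compl, Ortholattice.compl_compl] at hb
  rw [sup_comm, inf_comm]; exact hb.symm
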